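/- Let G be a subset of 2^ω contained in P_∞, having the Baire property and non-meager. Then there is an injective continuous map f : 2^ω → 2^ω such that f maps P_∞ into G and maps P_f into P_f. -/

import Mathlib

/-- The set of eventually-zero binary sequences. -/
def Pfin : Set (ℕ → Bool) := {α | ∃ N : ℕ, ∀ n ≥ N, α n = false}

/-- A set has the Baire property if it differs from an open set by a meager set. -/
def HasBaireProperty {X : Type*} [TopologicalSpace X] (A : Set X) : Prop :=
  ∃ U : Set X, IsOpen U ∧ IsMeagre ((A \ U) ∪ (U \ A))

namespace IntoNM

open Set List Filter Topology

/-- The cylinder of a finite binary string. -/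
def Cyl (l : List Bool) : Set (ℕ → Bool) := {x | ∀ i < l.length, x i = l.getD i false}

lemma isOpen_cyl (l : List Bool) : IsOpen (Cyl l) := by
  have h : Cyl l = ⋂ i ∈ Finset.range l.length, {x : ℕ → Bool | x i = l.getD i false} := by
    ext x
    simp [Cyl]
  rw [h]
  refine isOpen_biInter_finset fun i _ => ?_
  show IsOpen ((fun p : ℕ → Bool => p i) ⁻¹' {l.getD i false})
  exact (isOpen_discrete _).preimage (continuous_apply i)

lemma mem_cyl_pad (l : List Bool) : (fun k => l.getD k false) ∈ Cyl l := fun _ _ => rfl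

lemma cyl_nonempty (l : List Bool) : (Cyl l).Nonempty := ⟨_, mem_cyl_pad l⟩

/-- The prefix of length `n` of a sequence. -/
def pre (x : ℕ → Bool) (n : ℕ) : List Bool := List.ofFn fun i : Fin n => x i

@[simp] lemma length_pre (x : ℕ → Bool) (n : ℕ) : (pre x n).length = n := by
  simp [pre]

lemma getD_pre (x : ℕ → Bool) {i n : ℕ} (h : i < n) : (pre x n).getD i false = x i := by
  rw [List.getD_eq_getElem _ _ (by simpa using h)]
  simp [pre]

lemma mem_cyl_pre (x : ℕ → Bool) (n : ℕ) : x ∈ Cyl (pre x n) := by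
  intro i hi
  rw [getD_pre x (by simpa using hi)]

lemma cyl_pre_mono (x : ℕ → Bool) {m n : ℕ} (h : m ≤ n) : Cyl (pre x n) ⊆ Cyl (pre x m) := by
  intro y hy i hi
  simp only [length_pre] at hi
  rw [getD_pre x hi]
  have := hy i (by simpa using lt_of_lt_of_le hi h)
  rwa [getD_pre x (lt_of_lt_of_le hi h)] at this

lemma getD_of_prefix {l₁ l₂ : List Bool} (h : l₁ <+: l₂) {i : ℕ} (hi : i < l₁.length) :
    l₁.getD i false = l₂.getD i false := by
  rw [List.getD_eq_getElem _ _ hi, List.getD_eq_getElem _ _ (lt_of_lt_of_le hi h.length_le)]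
  exact h.getElem hi

lemma prefix_pre_of_mem {u : List Bool} {x : ℕ → Bool} (hx : x ∈ Cyl u) {m : ℕ}
    (h : u.length ≤ m) : u <+: pre x m := by
  rw [List.prefix_iff_eq_take]
  apply List.ext_getElem (by simp [min_eq_left h])
  intro i h1 h2
  have hiu : i < u.length := h1
  have hx' := hx i hiu
  rw [List.getD_eq_getElem _ false hiu] at hx'
  simp [pre, ← hx']

lemma exists_cyl_pre_subset {U : Set (ℕ → Bool)} (hU : IsOpen U) {x : ℕ → Bool} (hx : x ∈ U) :
    ∃ n, Cyl (pre x n) ⊆ U := by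
  obtain ⟨I, u, hIu, hsub⟩ := isOpen_pi_iff.1 hU x hx
  refine ⟨I.sup id + 1, fun y hy => hsub ?_⟩
  intro i hi
  have hilt : i < I.sup id + 1 := Nat.lt_succ_of_le (Finset.le_sup (f := id) hi)
  have := hy i (by simpa using hilt)
  rw [getD_pre x hilt] at this
  rw [this]
  exact (hIu i hi).2

/-- Key extension step: extend any string into a given dense open set. -/
lemma exists_ext (u : List Bool) {D : Set (ℕ → Bool)} (hO : IsOpen D) (hd : Dense D) :
    ∃ v : List Bool, u <+: v ∧ Cyl v ⊆ D := by
  obtain ⟨x, hxD, hxu⟩ := hd.exists_mem_open (isOpen_cyl u) (cyl_nonempty u)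
  obtain ⟨n, hn⟩ := exists_cyl_pre_subset hO hxD
  exact ⟨pre x (max n u.length), prefix_pre_of_mem hxu (le_max_right _ _),
    fun y hy => hn (cyl_pre_mono x (le_max_left _ _) hy)⟩

/-- The Cantor scheme: at a `true` bit we dive into the `n`-th dense open set via `E`,
at a `false` bit we append a `false`. -/
def scheme (base : List Bool) (E : List Bool → ℕ → List Bool) : ℕ → (ℕ → Bool) → List Bool
  | 0, _ => base
  | n + 1, α => if α n then E (scheme base E n α) n else scheme base E n α ++ [false]

/-- The limit map of the scheme. -/
def limitMap (base : List Bool) (E : List Bool → ℕ → List Bool)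
    (α : ℕ → Bool) (k : ℕ) : Bool :=
  (scheme base E (k + 1) α).getD k false

variable {base : List Bool} {E : List Bool → ℕ → List Bool}

lemma scheme_congr {n : ℕ} {α β : ℕ → Bool} (hagree : ∀ i < n, α i = β i) :
    scheme base E n α = scheme base E n β := by
  induction n with
  | zero => rfl
  | succ m ih =>
    have h1 : scheme base E m α = scheme base E m β :=
      ih fun i hi => hagree i (Nat.lt_succ_of_lt hi)
    simp only [scheme, h1, hagree m (Nat.lt_succ_self m)]

section
variable (hE : ∀ u n, u ++ [true] <+: E u n)
include hE

lemma scheme_prefix_succ (n : ℕ) (α : ℕ → Bool) :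
    scheme base E n α <+: scheme base E (n + 1) α := by
  show scheme base E n α <+: if α n then _ else _
  cases h : α n with
  | false => simp
  | true =>
    simp only [if_true]
    exact ((scheme base E n α).prefix_append [true]).trans (hE _ n)

lemma scheme_prefix {m n : ℕ} (h : m ≤ n) (α : ℕ → Bool) :
    scheme base E m α <+: scheme base E n α := by
  induction n, h using Nat.le_induction with
  | base => exact List.prefix_rfl
  | succ k hk ih => exact ih.trans (scheme_prefix_succ hE k α)

lemma scheme_length (n : ℕ) (α : ℕ → Bool) :
    base.length + n ≤ (scheme base E n α).length := by
  induction n with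
  | zero => simp [scheme]
  | succ m ih =>
    show base.length + (m+1) ≤ (if α m then _ else _ : List Bool).length
    cases h : α m with
    | false =>
      simp only [if_neg Bool.false_ne_true, List.length_append, List.length_cons, List.length_nil]
      omega
    | true =>
      simp only [if_true]
      have h2 := (hE (scheme base E m α) m).length_le
      simp only [List.length_append, List.length_cons, List.length_nil] at h2
      omega

lemma lt_scheme_length {k n : ℕ} (h : k < n) (α : ℕ → Bool) :
    k < (scheme base E n α).length :=
  lt_of_lt_of_le (by omega : k < base.length + n) (scheme_length hE n α)

lemma limitMap_eq_getD {k n : ℕ} (α : ℕ → Bool) (h : k < (scheme base E n α).length) :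
    limitMap base E α k = (scheme base E n α).getD k false := by
  unfold limitMap
  rcases le_total (k + 1) n with h' | h'
  · exact getD_of_prefix (scheme_prefix hE h' α) (lt_scheme_length hE (Nat.lt_succ_self k) α)
  · exact (getD_of_prefix (scheme_prefix hE h' α) h).symm

lemma limitMap_mem_cyl (α : ℕ → Bool) (n : ℕ) :
    limitMap base E α ∈ Cyl (scheme base E n α) := fun _ hi => limitMap_eq_getD hE α hi

end

/-- A coordinate function depending on finitely many coordinates is continuous. -/
lemma continuous_of_det {g : (ℕ → Bool) → Bool} (n : ℕ)
    (h : ∀ α β : ℕ → Bool, (∀ i < n, α i = β i) → g α = g β) : Continuous g := by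
  rw [continuous_iff_continuousAt]
  intro α
  unfold ContinuousAt
  rw [show 𝓝 (g α) = pure (g α) by rw [nhds_discrete]]
  rw [Filter.tendsto_pure]
  have hmem : Cyl (pre α n) ∈ 𝓝 α := (isOpen_cyl _).mem_nhds (mem_cyl_pre α n)
  filter_upwards [hmem] with β hβ
  refine h β α fun i hi => ?_
  have := hβ i (by simpa using hi)
  rwa [getD_pre α hi] at this

lemma isMeagre_union {X : Type*} [TopologicalSpace X] {s t : Set X}
    (hs : IsMeagre s) (ht : IsMeagre t) : IsMeagre (s ∪ t) := by
  unfold IsMeagre at *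
  rw [Set.compl_union]
  exact Filter.inter_mem hs ht

lemma exists_dense_open_seq {M : Set (ℕ → Bool)} (hM : IsMeagre M) :
    ∃ D : ℕ → Set (ℕ → Bool), (∀ n, IsOpen (D n)) ∧ (∀ n, Dense (D n)) ∧ (⋂ n, D n) ⊆ Mᶜ := by
  obtain ⟨t, hts, hGδ, hdense⟩ := mem_residual.1 hM
  obtain ⟨f, hopen, rfl⟩ := isGδ_iff_eq_iInter_nat.1 hGδ
  exact ⟨f, hopen, fun n => Dense.mono (Set.iInter_subset f n) hdense, hts⟩

lemma getD_replicate_false (j i : ℕ) : (List.replicate j false).getD i false = false := by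
  rcases lt_or_ge i j with h | h
  · rw [List.getD_eq_getElem _ _ (by simpa using h)]
    simp
  · exact List.getD_eq_default _ _ (by simpa using h)

end IntoNM

open IntoNM Set List

theorem into_nonmeager_subset_of_irrationals
    (G : Set (ℕ → Bool)) (hG : G ⊆ Pfinᶜ) (hBP : HasBaireProperty G)
    (hnm : ¬ IsMeagre G) :
    ∃ f : (ℕ → Bool) → (ℕ → Bool), Function.Injective f ∧ Continuous f ∧
      Set.MapsTo f Pfinᶜ G ∧ Set.MapsTo f Pfin Pfin := by
  classical
  obtain ⟨U, hUopen, hUm⟩ := hBP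
  have hGU : IsMeagre (G \ U) := hUm.mono Set.subset_union_left
  have hUG : IsMeagre (U \ G) := hUm.mono Set.subset_union_right
  -- U is nonmeager, hence nonempty
  have hUnm : ¬ IsMeagre U := by
    intro hU
    exact hnm ((isMeagre_union hU hGU).mono (fun x hx => by
      by_cases h : x ∈ U
      · exact Or.inl h
      · exact Or.inr ⟨hx, h⟩))
  have hUne : U.Nonempty := by
    rcases Set.eq_empty_or_nonempty U with rfl | h
    · exact absurd IsMeagre.empty hUnm
    · exact h
  obtain ⟨x, hxU⟩ := hUne
  obtain ⟨n0, hbase⟩ := exists_cyl_pre_subset hUopen hxU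
  set base := pre x n0 with hbdef
  have hM : IsMeagre (Cyl base \ G) := hUG.mono (fun y (hy : y ∈ Cyl base \ G) => (⟨hbase hy.1, hy.2⟩ : y ∈ U \ G))
  obtain ⟨D0, hD0open, hD0dense, hD0sub⟩ := exists_dense_open_seq hM
  -- the antitone sequence of dense open sets
  set D : ℕ → Set (ℕ → Bool) := fun n => ⋂ i ∈ Finset.range (n + 1), D0 i with hDdef
  have hDopen : ∀ n, IsOpen (D n) := fun n => isOpen_biInter_finset fun i _ => hD0open i
  have hDdense : ∀ n, Dense (D n) := by
    intro n
    induction n with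
    | zero => simpa [hDdef] using hD0dense 0
    | succ m ih =>
      have heq : D (m + 1) = D0 (m + 1) ∩ D m := by
        simp only [hDdef]
        rw [Finset.range_add_one, Finset.set_biInter_insert]
      rw [heq]
      exact Dense.inter_of_isOpen_left (hD0dense (m + 1)) ih (hD0open (m + 1))
  have hDsub : ∀ m n, m ≤ n → D n ⊆ D0 m := fun m n h =>
    Set.biInter_subset_of_mem (Finset.mem_range.2 (by omega))
  -- choose extension function
  have hch : ∀ (u : List Bool) (n : ℕ), ∃ v, u ++ [true] <+: v ∧ Cyl v ⊆ D n :=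
    fun u n => exists_ext (u ++ [true]) (hDopen n) (hDdense n)
  choose E hE hE2 using hch
  set f := limitMap base E with hfdef
  have hG' : ∀ y : ℕ → Bool, y ∈ Cyl base → (∀ m, y ∈ D0 m) → y ∈ G := by
    intro y hy1 hy2
    have : y ∈ (Cyl base \ G)ᶜ := hD0sub (Set.mem_iInter.2 hy2)
    simp only [Set.mem_compl_iff, Set.mem_diff, not_and, not_not] at this
    exact this hy1
  -- the key coordinate computation at a splitting node
  have hkey : ∀ (n : ℕ) (γ : ℕ → Bool), f γ ((scheme base E n γ).length) = γ n := by
    intro n γ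
    set L := (scheme base E n γ).length with hL
    have hlen : L < (scheme base E (n + 1) γ).length := by
      show L < (if γ n then _ else _ : List Bool).length
      cases h : γ n with
      | false => simp [hL]
      | true =>
        simp only [if_true]
        have h2 := (hE (scheme base E n γ) n).length_le
        simp only [List.length_append, List.length_cons, List.length_nil] at h2
        omega
    rw [hfdef, limitMap_eq_getD hE γ hlen]
    show (if γ n then _ else _ : List Bool).getD L false = γ n
    cases h : γ n with
    | false =>
      simp only [if_neg Bool.false_ne_true]
      rw [List.getD_append_right _ _ _ _ (le_refl L)]
      simp
    | true =>
      simp only [if_true]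
      rw [← getD_of_prefix (hE (scheme base E n γ) n)
        (by simp only [List.length_append, List.length_cons, List.length_nil]; omega)]
      rw [List.getD_append_right _ _ _ _ (le_refl L)]
      simp [hL]
  refine ⟨f, ?_, ?_, ?_, ?_⟩
  · -- injectivity
    intro α β hfab
    by_contra hab
    have hex : ∃ n, α n ≠ β n := by
      by_contra h
      push_neg at h
      exact hab (funext h)
    set n := Nat.find hex with hndef
    have hn : α n ≠ β n := Nat.find_spec hex
    have hagree : ∀ i < n, α i = β i := fun i hi => not_not.1 (Nat.find_min hex hi)
    have hsch : scheme base E n α = scheme base E n β := scheme_congr hagree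
    have h1 := hkey n α
    have h2 := hkey n β
    rw [hsch] at h1
    rw [hfab] at h1
    exact hn (h1 ▸ h2 ▸ rfl)
  · -- continuity
    apply continuous_pi
    intro k
    exact continuous_of_det (k + 1) fun α β hagree => by
      show (scheme base E (k + 1) α).getD k false = (scheme base E (k + 1) β).getD k false
      rw [scheme_congr hagree]
  · -- maps the irrationals into G
    intro α hα
    apply hG' (f α)
    · exact limitMap_mem_cyl (base := base) hE α 0
    · intro m
      have hα' : ∃ n ≥ m, α n = true := by
        simp only [Set.mem_compl_iff, Pfin, Set.mem_setOf_eq, not_exists, not_forall] at hα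
        obtain ⟨n, hn1, hn2⟩ := hα m
        exact ⟨n, hn1, by simpa using hn2⟩
      obtain ⟨n, hnm', hn⟩ := hα'
      have hmem : f α ∈ Cyl (scheme base E (n + 1) α) := limitMap_mem_cyl hE α (n + 1)
      have heq : scheme base E (n + 1) α = E (scheme base E n α) n := by
        show (if α n then _ else _ : List Bool) = _
        rw [hn]
        simp
      rw [heq] at hmem
      exact hDsub m n hnm' (hE2 _ n hmem)
  · -- maps Pfin into Pfin
    intro α hα
    obtain ⟨N, hN⟩ := hα
    have hrep : ∀ m, scheme base E (N + m) α = scheme base E N α ++ List.replicate m false := by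
      intro m
      induction m with
      | zero => simp
      | succ j ih =>
        have : scheme base E (N + (j + 1)) α =
            if α (N + j) then E (scheme base E (N + j) α) (N + j)
            else scheme base E (N + j) α ++ [false] := rfl
        rw [this, if_neg (by simp [hN (N + j) (Nat.le_add_right N j)]), ih,
          List.append_assoc]
        congr 1
        rw [List.replicate_succ']
    refine ⟨(scheme base E N α).length, fun k hk => ?_⟩
    set L0 := (scheme base E N α).length with hL0
    have hNL0 : N ≤ L0 := le_trans (by omega : N ≤ base.length + N) (scheme_length hE N α)
    have hkN : N ≤ k + 1 := by omega
    have heq : scheme base E (k + 1) α = scheme base E N α ++ List.replicate (k + 1 - N) false := by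
      have := hrep (k + 1 - N)
      rwa [Nat.add_sub_cancel' hkN] at this
    show (scheme base E (k + 1) α).getD k false = false
    rw [heq, List.getD_append_right _ _ _ _ (by omega)]
    exact getD_replicate_false _ _
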